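/- arXiv:1409.6879 — 4 statements merged into one kernel-verified Lean document; each statement's English description precedes it below -/
import Mathlib

section
/- Let n ≥ 1. A set family P of shape (2^n), i.e. a collection of n distinct 2-subsets of ℕ, is closed if and only if there exist r ≥ 1 and integers α_1 > α_2 > … > α_r > 0 with α_1 + … + α_r = n such that P = { {i, i+j} : 1 ≤ i ≤ r, 1 ≤ j ≤ α_i }. -/
/-- The multiplicity of `i` in a set family `P`: the number of sets in `P` containing `i`. -/
def famMult (P : Finset (Finset ℕ)) (i : ℕ) : ℕ := (P.filter fun S => i ∈ S).card

/-- `P` is a set family of shape `(m^n)`: a collection of `n` distinct `m`-subsets of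
the positive integers. -/
def IsSetFamily (m n : ℕ) (P : Finset (Finset ℕ)) : Prop :=
  P.card = n ∧ ∀ S ∈ P, S.card = m ∧ ∀ x ∈ S, 1 ≤ x

/-- `B` majorizes `A` (written `A ⪯ B`): the `r`-th smallest element of `A` is at most
the `r`-th smallest element of `B` (the sets in question have the same cardinality). -/
def SetMaj (A B : Finset ℕ) : Prop :=
  ∀ r : ℕ, (A.sort (· ≤ ·)).getD r 0 ≤ (B.sort (· ≤ ·)).getD r 0

/-- A set family (of `m`-subsets) is closed if it is downward closed under majorization. -/
def ClosedFam (m : ℕ) (P : Finset (Finset ℕ)) : Prop :=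
  ∀ B ∈ P, ∀ A : Finset ℕ, A.card = m → (∀ x ∈ A, 1 ≤ x) → SetMaj A B → A ∈ P

/-- The type of a family (or tuple) whose multiplicity function is `f` is defined exactly
when `f` is weakly decreasing on the positive integers; then `f` is the conjugate `λ'`
of the type `λ`. -/
def TypeDefined (f : ℕ → ℕ) : Prop := ∀ i j : ℕ, 1 ≤ i → i ≤ j → f j ≤ f i

/-- The sum of the first `j` parts of the partition `λ` whose conjugate is `f`:
`λ_1 + ⋯ + λ_j = Σ_x min (λ'_x) j`. -/
noncomputable def partSum (f : ℕ → ℕ) (j : ℕ) : ℕ := ∑ᶠ x, min (f x) j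

/-- Dominance order: the partition with conjugate `g` is dominated (`⊴`) by the partition
with conjugate `f`. -/
def ConjDom (g f : ℕ → ℕ) : Prop := ∀ j : ℕ, partSum g j ≤ partSum f j

/-- Strict dominance `⊲` of the partition with conjugate `g` by the one with conjugate `f`. -/
def ConjStrictDom (g f : ℕ → ℕ) : Prop := ConjDom g f ∧ ∃ i : ℕ, 1 ≤ i ∧ g i ≠ f i

/-- The total multiplicity of `i` over a tuple of set families. -/
def tupMult {k : ℕ} (P : Fin k → Finset (Finset ℕ)) (i : ℕ) : ℕ := ∑ j, famMult (P j) i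


lemma sort_pair' {a b : ℕ} (h : a < b) : ({a,b} : Finset ℕ).sort (·≤·) = [a,b] := by
  have h2 : ({a,b} : Finset ℕ).sort (·≤·) = a :: ({b} : Finset ℕ).sort (·≤·) :=
    Finset.sort_insert _ (by simp [h.le]) (by simp [h.ne])
  rw [h2, Finset.sort_singleton]

lemma setMaj_pair {a b c d : ℕ} (hab : a < b) (hcd : c < d) :
    SetMaj {a,b} {c,d} ↔ a ≤ c ∧ b ≤ d := by
  unfold SetMaj
  rw [sort_pair' hab, sort_pair' hcd]
  constructor
  · intro h; exact ⟨h 0, h 1⟩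
  · rintro ⟨h1,h2⟩ r
    match r with
    | 0 => exact h1
    | 1 => exact h2
    | (n+2) => simp [List.getD]

lemma pair_decomp {S : Finset ℕ} (h : S.card = 2) : ∃ a b, a < b ∧ S = {a,b} := by
  obtain ⟨a,b,hne,rfl⟩ := Finset.card_eq_two.mp h
  rcases hne.lt_or_gt with h|h
  · exact ⟨a,b,h,rfl⟩
  · exact ⟨b,a,h, Finset.pair_comm a b⟩

lemma dc_eq_Icc {J : Finset ℕ} (hpos : ∀ j ∈ J, 1 ≤ j)
    (h : ∀ j ∈ J, ∀ j', 1 ≤ j' → j' ≤ j → j' ∈ J) :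
    J = Finset.Icc 1 J.card := by
  have hsub : J ⊆ Finset.Icc 1 J.card := by
    intro j hj
    have h1 : Finset.Icc 1 j ⊆ J := fun j' hj' => by
      rw [Finset.mem_Icc] at hj'; exact h j hj j' hj'.1 hj'.2
    have := Finset.card_le_card h1
    rw [Nat.card_Icc] at this
    rw [Finset.mem_Icc]
    exact ⟨hpos j hj, by omega⟩
  exact Finset.eq_of_subset_of_card_le hsub (by rw [Nat.card_Icc]; omega)

lemma alpha_step {α : ℕ → ℕ} {r : ℕ} (hdec : ∀ i j, 1 ≤ i → i < j → j ≤ r → α j < α i)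
    {a : ℕ} (ha : 1 ≤ a) : ∀ d, a + d ≤ r → α (a+d) + d ≤ α a := by
  intro d
  induction d with
  | zero => simp
  | succ d ih =>
    intro h
    rw [show a + (d+1) = a + d + 1 from rfl]
    have h1 := ih (by omega)
    have h3 : α (a+d+1) < α (a+d) := hdec (a+d) (a+d+1) (by omega) (by omega) (by omega)
    omega

/-- A set family of shape `(2^n)` is closed iff it has the form
`{ {i, i+j} : 1 ≤ i ≤ r, 1 ≤ j ≤ α_i }` for some `α_1 > ⋯ > α_r > 0` with `Σ α_i = n`. -/
theorem stmt_11 (n : ℕ) (hn : 1 ≤ n) (P : Finset (Finset ℕ)) (hP : IsSetFamily 2 n P) :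
    ClosedFam 2 P ↔
      ∃ (r : ℕ) (α : ℕ → ℕ), 1 ≤ r ∧
        (∀ i j : ℕ, 1 ≤ i → i < j → j ≤ r → α j < α i) ∧
        (∀ i : ℕ, 1 ≤ i → i ≤ r → 0 < α i) ∧
        (∑ i ∈ Finset.Icc 1 r, α i) = n ∧
        P = (Finset.Icc 1 r).biUnion fun i =>
              (Finset.Icc 1 (α i)).image fun j => ({i, i + j} : Finset ℕ) := by
  obtain ⟨hcard, hmem⟩ := hP
  constructor
  · intro hcl
    classical
    have hclapp : ∀ a j c k : ℕ, ({a, a+j} : Finset ℕ) ∈ P → 1 ≤ j → 1 ≤ c → 1 ≤ k →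
        c ≤ a → c + k ≤ a + j → ({c, c+k} : Finset ℕ) ∈ P := by
      intro a j c k hB hj hc hk hca hck
      exact hcl _ hB _ (Finset.card_pair (by omega))
        (by intro x hx; simp only [Finset.mem_insert, Finset.mem_singleton] at hx; omega)
        ((setMaj_pair (by omega) (by omega)).mpr ⟨hca, hck⟩)
    have hbound : ∀ a j : ℕ, ({a,a+j} : Finset ℕ) ∈ P → 1 ≤ a → 1 ≤ j → a + j ≤ n + 1 := by
      intro a j hB ha hj
      have hsub : Finset.image (fun j' => ({1, 1+j'} : Finset ℕ)) (Finset.Icc 1 (a+j-1)) ⊆ P := by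
        intro S hS
        simp only [Finset.mem_image, Finset.mem_Icc] at hS
        obtain ⟨j', ⟨h1, h2⟩, rfl⟩ := hS
        exact hclapp a j 1 j' hB hj le_rfl h1 ha (by omega)
      have hinj : Set.InjOn (fun j' => ({1, 1+j'} : Finset ℕ)) (Finset.Icc 1 (a+j-1)) := by
        intro x hx y hy hxy
        have hxy' : ({1, 1+x} : Finset ℕ) = {1, 1+y} := hxy
        have h1 : (1+x) ∈ ({1, 1+y} : Finset ℕ) := by rw [← hxy']; simp
        simp only [Finset.mem_insert, Finset.mem_singleton] at h1
        simp only [Finset.coe_Icc, Set.mem_Icc] at hx hy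
        omega
      have := Finset.card_le_card hsub
      rw [Finset.card_image_of_injOn hinj, Nat.card_Icc, hcard] at this
      omega
    set J : ℕ → Finset ℕ :=
      fun i => (Finset.Icc 1 n).filter (fun j => ({i, i+j} : Finset ℕ) ∈ P) with hJdef
    set α : ℕ → ℕ := fun i => (J i).card with hαdef
    have hJ : ∀ i : ℕ, 1 ≤ i → J i = Finset.Icc 1 (α i) := by
      intro i hi
      rw [hαdef]
      exact dc_eq_Icc
        (by intro j hj; simp only [hJdef, Finset.mem_filter, Finset.mem_Icc] at hj; omega)
        (by
          intro j hj j' h1 h2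
          simp only [hJdef, Finset.mem_filter, Finset.mem_Icc] at hj ⊢
          exact ⟨⟨h1, le_trans h2 hj.1.2⟩, hclapp i j i j' hj.2 hj.1.1 hi h1 le_rfl (by omega)⟩)
    have hchar : ∀ i j : ℕ, 1 ≤ i → 1 ≤ j → (({i, i+j} : Finset ℕ) ∈ P ↔ j ≤ α i) := by
      intro i j hi hj
      constructor
      · intro h
        have hb := hbound i j h hi hj
        have hJm : j ∈ J i := by
          simp only [hJdef, Finset.mem_filter, Finset.mem_Icc]
          exact ⟨⟨hj, by omega⟩, h⟩
        rw [hJ i hi, Finset.mem_Icc] at hJm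
        exact hJm.2
      · intro h
        have hJm : j ∈ J i := by rw [hJ i hi]; exact Finset.mem_Icc.mpr ⟨hj, h⟩
        simp only [hJdef, Finset.mem_filter] at hJm
        exact hJm.2
    set R : Finset ℕ := (Finset.Icc 1 n).filter (fun i => 0 < α i) with hRdef
    set r : ℕ := R.card with hrdef
    have hRpos : ∀ i ∈ R, 0 < α i ∧ 1 ≤ i ∧ i ≤ n := by
      intro i hi
      simp only [hRdef, Finset.mem_filter, Finset.mem_Icc] at hi
      exact ⟨hi.2, hi.1.1, hi.1.2⟩
    have hR1 : ∀ i, 1 ≤ i → 0 < α i → ({i, i+1} : Finset ℕ) ∈ P :=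
      fun i hi h => (hchar i 1 hi le_rfl).mpr h
    have hRmem : ∀ i, 1 ≤ i → 0 < α i → i ∈ R := by
      intro i hi h
      have := hbound i 1 (hR1 i hi h) hi le_rfl
      simp only [hRdef, Finset.mem_filter, Finset.mem_Icc]
      exact ⟨⟨hi, by omega⟩, h⟩
    have hRIcc : R = Finset.Icc 1 r := by
      rw [hrdef]
      apply dc_eq_Icc
      · intro i hi; exact (hRpos i hi).2.1
      · intro i hi i' h1 h2
        obtain ⟨hposi, hi1, hin⟩ := hRpos i hi
        have hP' : ({i', i'+1} : Finset ℕ) ∈ P :=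
          hclapp i 1 i' 1 (hR1 i hi1 hposi) le_rfl h1 le_rfl h2 (by omega)
        exact hRmem i' h1 ((hchar i' 1 h1 le_rfl).mp hP')
    have hpos : ∀ i, 1 ≤ i → i ≤ r → 0 < α i := by
      intro i h1 h2
      have hiR : i ∈ R := by rw [hRIcc]; exact Finset.mem_Icc.mpr ⟨h1, h2⟩
      exact (hRpos i hiR).1
    have hr1 : 1 ≤ r := by
      obtain ⟨S, hS⟩ : P.Nonempty := Finset.card_pos.mp (by omega)
      obtain ⟨a, b, hab, rfl⟩ := pair_decomp (hmem _ hS).1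
      have ha : 1 ≤ a := (hmem _ hS).2 a (by simp)
      have hS' : ({a, a + (b-a)} : Finset ℕ) ∈ P := by
        rw [show a + (b-a) = b from by omega]; exact hS
      have h12 : ({1, 1+1} : Finset ℕ) ∈ P :=
        hclapp a (b-a) 1 1 hS' (by omega) le_rfl le_rfl ha (by omega)
      have h1R : (1 : ℕ) ∈ R := hRmem 1 le_rfl ((hchar 1 1 le_rfl le_rfl).mp h12)
      have := Finset.card_pos.mpr ⟨1, h1R⟩
      omega
    have hstep : ∀ i, 1 ≤ i → 0 < α (i+1) → α (i+1) < α i := by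
      intro i hi h
      have hB : ({i+1, (i+1) + α (i+1)} : Finset ℕ) ∈ P :=
        (hchar (i+1) (α (i+1)) (by omega) h).mpr le_rfl
      have hA : ({i, i + (α (i+1) + 1)} : Finset ℕ) ∈ P :=
        hclapp (i+1) (α (i+1)) i (α (i+1)+1) hB h hi (by omega) (by omega) (by omega)
      have := (hchar i (α (i+1)+1) hi (by omega)).mp hA
      omega
    have hdec0 : ∀ d i, 1 ≤ i → i + d + 1 ≤ r → α (i+d+1) < α i := by
      intro d
      induction d with
      | zero =>
        intro i h1 h2
        simpa using hstep i h1 (hpos (i+1) (by omega) (by omega))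
      | succ d ih =>
        intro i h1 h2
        have ha := ih (i+1) (by omega) (by omega)
        have hb := hstep i h1 (hpos (i+1) (by omega) (by omega))
        rw [show i + (d+1) + 1 = (i+1) + d + 1 from by omega]
        omega
    have hdec : ∀ i j, 1 ≤ i → i < j → j ≤ r → α j < α i := by
      intro i j h1 h2 h3
      have := hdec0 (j - i - 1) i h1 (by omega)
      rwa [show i + (j-i-1) + 1 = j from by omega] at this
    have hPeq : P = (Finset.Icc 1 r).biUnion fun i =>
        (Finset.Icc 1 (α i)).image fun j => ({i, i+j} : Finset ℕ) := by
      ext S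
      simp only [Finset.mem_biUnion, Finset.mem_image, Finset.mem_Icc]
      constructor
      · intro hS
        obtain ⟨a, b, hab, rfl⟩ := pair_decomp (hmem _ hS).1
        have ha : 1 ≤ a := (hmem _ hS).2 a (by simp)
        have hS' : ({a, a + (b-a)} : Finset ℕ) ∈ P := by
          rw [show a + (b-a) = b from by omega]; exact hS
        have hj := (hchar a (b-a) ha (by omega)).mp hS'
        have haR : a ∈ R := hRmem a ha (by omega)
        rw [hRIcc, Finset.mem_Icc] at haR
        exact ⟨a, haR, b - a, ⟨by omega, hj⟩, by rw [show a + (b-a) = b from by omega]⟩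
      · rintro ⟨i, ⟨hi1, hir⟩, j, ⟨hj1, hj2⟩, rfl⟩
        exact (hchar i j hi1 hj1).mpr hj2
    have hsum : (∑ i ∈ Finset.Icc 1 r, α i) = n := by
      have hdisj : ∀ x ∈ Finset.Icc 1 r, ∀ y ∈ Finset.Icc 1 r, x ≠ y →
          Disjoint ((Finset.Icc 1 (α x)).image fun j => ({x, x+j} : Finset ℕ))
                   ((Finset.Icc 1 (α y)).image fun j => ({y, y+j} : Finset ℕ)) := by
        intro x hx y hy hxy
        rw [Finset.disjoint_left]
        intro S hSx hSy
        simp only [Finset.mem_image, Finset.mem_Icc] at hSx hSy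
        obtain ⟨j, hj, rfl⟩ := hSx
        obtain ⟨k, hk, hEq⟩ := hSy
        have h1 : y ∈ ({x, x+j} : Finset ℕ) := by rw [← hEq]; simp
        have h2 : x ∈ ({y, y+k} : Finset ℕ) := by rw [hEq]; simp
        simp only [Finset.mem_insert, Finset.mem_singleton] at h1 h2
        omega
      rw [← hcard, hPeq, Finset.card_biUnion hdisj]
      apply Finset.sum_congr rfl
      intro i hi
      rw [Finset.card_image_of_injOn ?_, Nat.card_Icc]
      · omega
      · intro x hx y hy hxy
        have hxy' : ({i, i+x} : Finset ℕ) = {i, i+y} := hxy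
        have h1 : i + x ∈ ({i, i+y} : Finset ℕ) := by rw [← hxy']; simp
        simp only [Finset.mem_insert, Finset.mem_singleton] at h1
        simp only [Finset.coe_Icc, Set.mem_Icc] at hx hy
        omega
    exact ⟨r, α, hr1, hdec, hpos, hsum, hPeq⟩
  · rintro ⟨r, α, hr, hdec, hpos, hsum, hPeq⟩
    intro B hB A hA hApos hmaj
    rw [hPeq] at hB ⊢
    simp only [Finset.mem_biUnion, Finset.mem_image, Finset.mem_Icc] at hB ⊢
    obtain ⟨i, ⟨hi1, hir⟩, j, ⟨hj1, hjα⟩, hBeq⟩ := hB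
    obtain ⟨a, b, hab, rfl⟩ := pair_decomp hA
    have hmaj' : a ≤ i ∧ b ≤ i + j :=
      (setMaj_pair hab (by omega)).mp (by rw [hBeq]; exact hmaj)
    have ha1 : 1 ≤ a := hApos a (by simp)
    have hkey : α i + (i - a) ≤ α a := by
      have := alpha_step hdec ha1 (i - a) (by omega)
      rwa [show a + (i - a) = i from by omega] at this
    refine ⟨a, ⟨ha1, le_trans hmaj'.1 hir⟩, b - a, ⟨by omega, by omega⟩, ?_⟩
    rw [show a + (b-a) = b from by omega]
end

section
/- Let α_1 > α_2 > … > α_r > 0 be integers with α_1 + … + α_r = n. The set family P = { {i, i+j} : 1 ≤ i ≤ r, 1 ≤ j ≤ α_i } of shape (2^n) has a defined type, and this type equals 2[α]: explicitly, for 1 ≤ x ≤ r the number of sets in P containing x equals α_x + x − 1, and for x > r it equals #{i : 1 ≤ i ≤ r, α_i + i ≥ x}. -/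
/-- The closed set family `{ {i, i+j} : 1 ≤ i ≤ r, 1 ≤ j ≤ α_i }` of shape `(2^n)`. -/
def segFam (r : ℕ) (α : ℕ → ℕ) : Finset (Finset ℕ) :=
  (Finset.Icc 1 r).biUnion fun i => (Finset.Icc 1 (α i)).image fun j => ({i, i + j} : Finset ℕ)

def segDom (r : ℕ) (α : ℕ → ℕ) : Finset (ℕ × ℕ) :=
  (Finset.Icc 1 r).biUnion fun i => (Finset.Icc 1 (α i)).image fun j => (i, j)

lemma mem_segDom {r : ℕ} {α : ℕ → ℕ} {p : ℕ × ℕ} :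
    p ∈ segDom r α ↔ 1 ≤ p.1 ∧ p.1 ≤ r ∧ 1 ≤ p.2 ∧ p.2 ≤ α p.1 := by
  obtain ⟨i, j⟩ := p
  simp only [segDom, Finset.mem_biUnion, Finset.mem_image, Finset.mem_Icc, Prod.mk.injEq]
  constructor
  · rintro ⟨a, ⟨h1, h2⟩, b, ⟨h3, h4⟩, rfl, rfl⟩; exact ⟨h1, h2, h3, h4⟩
  · rintro ⟨h1, h2, h3, h4⟩; exact ⟨i, ⟨h1, h2⟩, j, ⟨h3, h4⟩, rfl, rfl⟩

lemma segFam_eq (r : ℕ) (α : ℕ → ℕ) :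
    segFam r α = (segDom r α).image fun p => ({p.1, p.1 + p.2} : Finset ℕ) := by
  ext S
  simp only [segFam, segDom, Finset.mem_biUnion, Finset.mem_image]
  constructor
  · rintro ⟨i, hi, j, hj, rfl⟩; exact ⟨(i, j), ⟨i, hi, j, hj, rfl⟩, rfl⟩
  · rintro ⟨p, ⟨i, hi, j, hj, rfl⟩, rfl⟩; exact ⟨i, hi, j, hj, rfl⟩

lemma segInj {r : ℕ} {α : ℕ → ℕ} :
    Set.InjOn (fun p : ℕ × ℕ => ({p.1, p.1 + p.2} : Finset ℕ)) (segDom r α) := by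
  rintro ⟨i, j⟩ hp ⟨i', j'⟩ hq h
  rw [Finset.mem_coe, mem_segDom] at hp hq
  simp only at h
  have h1 : i ∈ ({i', i' + j'} : Finset ℕ) := by rw [← h]; simp
  have h2 : i' ∈ ({i, i + j} : Finset ℕ) := by rw [h]; simp
  have h3 : i + j ∈ ({i', i' + j'} : Finset ℕ) := by rw [← h]; simp
  simp only [Finset.mem_insert, Finset.mem_singleton] at h1 h2 h3
  have : i = i' ∧ j = j' := by omega
  simp [this.1, this.2]

lemma famMult_eq (r : ℕ) (α : ℕ → ℕ) (x : ℕ) :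
    famMult (segFam r α) x
      = ((segDom r α).filter fun p => x = p.1 ∨ x = p.1 + p.2).card := by
  rw [famMult, segFam_eq, Finset.filter_image]
  rw [Finset.card_image_of_injOn (segInj.mono (by exact_mod_cast Finset.filter_subset _ _))]
  congr 1; ext p
  simp [Finset.mem_insert, eq_comm]

lemma segDom_card (r : ℕ) (α : ℕ → ℕ) :
    (segDom r α).card = ∑ i ∈ Finset.Icc 1 r, α i := by
  rw [segDom, Finset.card_biUnion]
  · refine Finset.sum_congr rfl fun i _ => ?_
    rw [Finset.card_image_of_injective _ (fun a b h => by simpa using h), Nat.card_Icc]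
    omega
  · intro a _ b _ hab
    simp only [Finset.disjoint_left, Finset.mem_image]
    rintro p ⟨j, _, rfl⟩ ⟨j', _, h⟩
    exact hab (by simpa using (Prod.mk.injEq .. ▸ h).1.symm)
section
variable {r : ℕ} {α : ℕ → ℕ}

lemma seg_gap (hdec : ∀ i j : ℕ, 1 ≤ i → i < j → j ≤ r → α j < α i) :
    ∀ d i : ℕ, 1 ≤ i → i + d ≤ r → α (i + d) + d ≤ α i := by
  intro d
  induction d with
  | zero => intro i _ _; simp
  | succ d ih =>
    intro i hi hir
    have h1 := ih (i + 1) (by omega) (by omega)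
    have h2 := hdec i (i + 1) hi (by omega) (by omega)
    rw [show i + 1 + d = i + (d + 1) by omega] at h1
    omega

end

section
variable {r n : ℕ} {α : ℕ → ℕ}

lemma famMult_small (hr : 1 ≤ r)
    (hdec : ∀ i j : ℕ, 1 ≤ i → i < j → j ≤ r → α j < α i)
    (hpos : ∀ i : ℕ, 1 ≤ i → i ≤ r → 0 < α i)
    {x : ℕ} (hx1 : 1 ≤ x) (hxr : x ≤ r) :
    famMult (segFam r α) x = α x + x - 1 := by
  rw [famMult_eq]
  have hset : ((segDom r α).filter fun p => x = p.1 ∨ x = p.1 + p.2)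
      = ((Finset.Icc 1 (α x)).image fun j => (x, j))
        ∪ ((Finset.Icc 1 (x - 1)).image fun i => (i, x - i)) := by
    ext ⟨i, j⟩
    simp only [Finset.mem_filter, mem_segDom, Finset.mem_union, Finset.mem_image,
      Finset.mem_Icc, Prod.mk.injEq]
    constructor
    · rintro ⟨⟨h1, h2, h3, h4⟩, h5 | h5⟩
      · exact Or.inl ⟨j, ⟨h3, h5 ▸ h4⟩, h5, rfl⟩
      · exact Or.inr ⟨i, ⟨h1, by omega⟩, rfl, by omega⟩
    · rintro (⟨j', ⟨hj1, hj2⟩, rfl, rfl⟩ | ⟨i', ⟨hi1, hi2⟩, rfl, rfl⟩)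
      · exact ⟨⟨hx1, hxr, hj1, hj2⟩, Or.inl rfl⟩
      · have hgap := seg_gap hdec (x - i') i' hi1 (by omega)
        rw [show i' + (x - i') = x by omega] at hgap
        have hax := hpos x hx1 hxr
        exact ⟨⟨hi1, by omega, by omega, by omega⟩, Or.inr (by omega)⟩
  rw [hset, Finset.card_union_of_disjoint, Finset.card_image_of_injective _
      (fun a b h => by simpa using h),
    Finset.card_image_of_injective _ (fun a b h => by simpa using (Prod.mk.injEq .. ▸ h).1),
    Nat.card_Icc, Nat.card_Icc]
  · omega
  · simp only [Finset.disjoint_left, Finset.mem_image, Finset.mem_Icc]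
    rintro p ⟨j, _, rfl⟩ ⟨i, hi, h⟩
    have := (Prod.mk.injEq .. ▸ h).1
    omega

lemma famMult_large {x : ℕ} (hx : r < x) :
    famMult (segFam r α) x = ((Finset.Icc 1 r).filter fun i => x ≤ α i + i).card := by
  rw [famMult_eq]
  have hset : ((segDom r α).filter fun p => x = p.1 ∨ x = p.1 + p.2)
      = ((Finset.Icc 1 r).filter fun i => x ≤ α i + i).image fun i => (i, x - i) := by
    ext ⟨i, j⟩
    simp only [Finset.mem_filter, mem_segDom, Finset.mem_image, Finset.mem_Icc, Prod.mk.injEq]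
    constructor
    · rintro ⟨⟨h1, h2, h3, h4⟩, h5 | h5⟩
      · omega
      · exact ⟨i, ⟨⟨h1, h2⟩, by omega⟩, rfl, by omega⟩
    · rintro ⟨i', ⟨⟨hi1, hi2⟩, hi3⟩, rfl, rfl⟩
      exact ⟨⟨hi1, hi2, by omega, by omega⟩, Or.inr (by omega)⟩
  rw [hset, Finset.card_image_of_injective _
    (fun a b h => by simpa using (Prod.mk.injEq .. ▸ h).1)]

end

/-- For `α_1 > ⋯ > α_r > 0` with `Σ α_i = n`, the family
`{ {i, i+j} : 1 ≤ i ≤ r, 1 ≤ j ≤ α_i }` has a defined type, equal to `2[α]`: the number of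
its sets containing `x` is `α_x + x - 1` for `1 ≤ x ≤ r`, and `#{i ≤ r : α_i + i ≥ x}` for
`x > r`. -/
theorem stmt_12 (n r : ℕ) (α : ℕ → ℕ) (hr : 1 ≤ r)
    (hdec : ∀ i j : ℕ, 1 ≤ i → i < j → j ≤ r → α j < α i)
    (hpos : ∀ i : ℕ, 1 ≤ i → i ≤ r → 0 < α i)
    (hsum : (∑ i ∈ Finset.Icc 1 r, α i) = n) :
    IsSetFamily 2 n (segFam r α) ∧
    TypeDefined (famMult (segFam r α)) ∧
    (∀ x : ℕ, 1 ≤ x → x ≤ r → famMult (segFam r α) x = α x + x - 1) ∧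
    (∀ x : ℕ, r < x →
      famMult (segFam r α) x = ((Finset.Icc 1 r).filter fun i => x ≤ α i + i).card) := by
  refine ⟨⟨?_, ?_⟩, ?_, fun x hx1 hxr => famMult_small hr hdec hpos hx1 hxr,
    fun x hx => famMult_large hx⟩
  · rw [segFam_eq, Finset.card_image_of_injOn segInj, segDom_card, hsum]
  · intro S hS
    rw [segFam_eq, Finset.mem_image] at hS
    obtain ⟨⟨i, j⟩, hp, rfl⟩ := hS
    rw [mem_segDom] at hp
    constructor
    · rw [Finset.card_insert_of_notMem (by simp; omega), Finset.card_singleton]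
    · intro x hx
      simp only [Finset.mem_insert, Finset.mem_singleton] at hx
      omega
  · intro i j hi hij
    by_cases hjr : j ≤ r
    · rw [famMult_small hr hdec hpos (by omega : 1 ≤ j) hjr,
        famMult_small hr hdec hpos hi (le_trans hij hjr)]
      have hg := seg_gap hdec (j - i) i hi (by omega)
      rw [show i + (j - i) = j by omega] at hg
      have := hpos j (by omega) hjr
      omega
    · by_cases hir : i ≤ r
      · rw [famMult_small hr hdec hpos hi hir, famMult_large (by omega)]
        have h1 : ((Finset.Icc 1 r).filter fun i' => j ≤ α i' + i').card ≤ r := by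
          refine le_trans (Finset.card_filter_le _ _) ?_
          rw [Nat.card_Icc]; omega
        have hg := seg_gap hdec (r - i) i hi (by omega)
        rw [show i + (r - i) = r by omega] at hg
        have := hpos r hr le_rfl
        omega
      · rw [famMult_large (by omega), famMult_large (by omega : r < i)]
        refine Finset.card_le_card ?_
        intro a ha
        simp only [Finset.mem_filter] at ha ⊢
        exact ⟨ha.1, by omega⟩
end

section
/- If α and β are distinct partitions of n into distinct parts, then the partitions 2[α] and 2[β] of 2n are incomparable in the dominance order: neither 2[α] ⊴ 2[β] nor 2[β] ⊴ 2[α] holds. -/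
/-- The conjugate of the partition `2[α]` of `2n` attached to a partition
`α_1 > ⋯ > α_r > 0` of `n` with distinct parts: its value at `x` is `α_x + x - 1` for
`1 ≤ x ≤ r` and `#{i : 1 ≤ i ≤ r, α_i + i ≥ x}` for `x > r` (and `0` at `x = 0`). -/
def twoConj (r : ℕ) (α : ℕ → ℕ) (x : ℕ) : ℕ :=
  if x = 0 then 0
  else if x ≤ r then α x + x - 1
  else ((Finset.Icc 1 r).filter fun i => x ≤ α i + i).card


open Finset

lemma partSum_eq_sum {f : ℕ → ℕ} {M : ℕ} (h : ∀ x, M < x → f x = 0) (j : ℕ) :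
    partSum f j = ∑ x ∈ Finset.Icc 0 M, min (f x) j := by
  apply finsum_eq_sum_of_support_subset
  intro x hx
  simp only [Function.mem_support] at hx
  simp only [coe_Icc, Set.mem_Icc]
  constructor
  · exact Nat.zero_le x
  · by_contra hc
    exact hx (by simp [h x (by omega)])

lemma finsum_eq_sum' {f : ℕ → ℕ} {M : ℕ} (h : ∀ x, M < x → f x = 0) :
    ∑ᶠ x, f x = ∑ x ∈ Finset.Icc 0 M, f x := by
  apply finsum_eq_sum_of_support_subset
  intro x hx
  simp only [Function.mem_support] at hx
  simp only [coe_Icc, Set.mem_Icc]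
  exact ⟨Nat.zero_le x, by by_contra hc; exact hx (h x (by omega))⟩

lemma downset_eq_Icc {A : Finset ℕ} {r : ℕ} (hA : A ⊆ Finset.Icc 1 r)
    (hdown : ∀ i j : ℕ, 1 ≤ i → i ≤ j → j ∈ A → i ∈ A) : A = Finset.Icc 1 A.card := by
  have hsub : A ⊆ Finset.Icc 1 A.card := by
    intro j hj
    have h1 : 1 ≤ j := (mem_Icc.mp (hA hj)).1
    have h2 : Finset.Icc 1 j ⊆ A := by
      intro i hi
      have := mem_Icc.mp hi
      exact hdown i j this.1 this.2 hj
    have := Finset.card_le_card h2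
    simp [Nat.card_Icc] at this
    exact mem_Icc.mpr ⟨h1, by omega⟩
  exact Finset.eq_of_subset_of_card_le hsub (by simp [Nat.card_Icc])

section
variable {r : ℕ} {α : ℕ → ℕ}
  (hαdec : ∀ i j : ℕ, 1 ≤ i → i < j → j ≤ r → α j < α i)
  (hαpos : ∀ i : ℕ, 1 ≤ i → i ≤ r → 0 < α i)

include hαdec in
lemma alpha_mono : ∀ i k : ℕ, 1 ≤ i → i ≤ k → k ≤ r → α k + k ≤ α i + i := by
  intro i k h1 hik hkr
  induction k with
  | zero => omega
  | succ m ih =>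
    rcases Nat.eq_or_lt_of_le hik with h | h
    · rw [h]
    · have hm : i ≤ m := by omega
      have := ih hm (by omega)
      have h2 : α (m+1) < α m := hαdec m (m+1) (by omega) (by omega) hkr
      omega

include hαdec hαpos in
lemma alpha_lb : ∀ i : ℕ, 1 ≤ i → i ≤ r → r + 1 ≤ α i + i := by
  intro i h1 h2
  have := alpha_mono hαdec i r h1 h2 le_rfl
  have := hαpos r (by omega) le_rfl
  omega

lemma twoConj_small {x : ℕ} (h1 : 1 ≤ x) (h2 : x ≤ r) :
    twoConj r α x = α x + x - 1 := by
  simp [twoConj, h2]; omega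

lemma twoConj_large {x : ℕ} (h2 : r < x) :
    twoConj r α x = ((Finset.Icc 1 r).filter fun i => x ≤ α i + i).card := by
  have hx0 : x ≠ 0 := by omega
  simp [twoConj, hx0, Nat.not_le.mpr h2]

include hαdec in
lemma twoConj_filter_eq {x : ℕ} (h2 : r < x) :
    ((Finset.Icc 1 r).filter fun i => x ≤ α i + i) = Finset.Icc 1 (twoConj r α x) := by
  rw [twoConj_large h2]
  apply downset_eq_Icc (Finset.filter_subset _ _)
  intro i j hi hij hj
  simp only [mem_filter, mem_Icc] at hj ⊢
  have := alpha_mono hαdec i j hi hij hj.1.2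
  exact ⟨⟨hi, by omega⟩, by omega⟩

include hαdec in
lemma twoConj_min_card {x j : ℕ} (h2 : r < x) (hjr : j ≤ r) :
    min (twoConj r α x) j = ((Finset.Icc 1 j).filter fun i => x ≤ α i + i).card := by
  have key : ((Finset.Icc 1 j).filter fun i => x ≤ α i + i)
      = Finset.Icc 1 (min (twoConj r α x) j) := by
    ext i
    simp only [mem_filter, mem_Icc, le_min_iff]
    constructor
    · rintro ⟨⟨hi1, hi2⟩, hp⟩
      have hmem : i ∈ Finset.Icc 1 (twoConj r α x) := by
        rw [← twoConj_filter_eq hαdec h2]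
        simp only [mem_filter, mem_Icc]
        exact ⟨⟨hi1, by omega⟩, hp⟩
      have := mem_Icc.mp hmem
      exact ⟨hi1, this.2, hi2⟩
    · rintro ⟨hi1, hic, hij⟩
      have hmem : i ∈ Finset.Icc 1 (twoConj r α x) := mem_Icc.mpr ⟨hi1, hic⟩
      rw [← twoConj_filter_eq hαdec h2] at hmem
      simp only [mem_filter, mem_Icc] at hmem
      exact ⟨⟨hi1, hij⟩, hmem.2⟩
  rw [key, Nat.card_Icc]
  omega

lemma count_Icc_le {a M : ℕ} (haM : a ≤ M) :
    ((Finset.Icc (r+1) M).filter fun x => x ≤ a).card = a - r := by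
  have : ((Finset.Icc (r+1) M).filter fun x => x ≤ a) = Finset.Icc (r+1) a := by
    ext x
    simp only [mem_filter, mem_Icc]
    omega
  rw [this, Nat.card_Icc]; omega

end

section
variable {r : ℕ} {α : ℕ → ℕ}
  (hαdec : ∀ i j : ℕ, 1 ≤ i → i < j → j ≤ r → α j < α i)
  (hαpos : ∀ i : ℕ, 1 ≤ i → i ≤ r → 0 < α i)

lemma twoConj_zero_of_gt {M : ℕ} (hb : ∀ i ∈ Finset.Icc 1 r, α i + i ≤ M) (hrM : r ≤ M) :
    ∀ x, M < x → twoConj r α x = 0 := by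
  intro x hx
  rw [twoConj_large (by omega)]
  rw [Finset.card_eq_zero, Finset.filter_eq_empty_iff]
  intro i hi
  have := hb i hi
  omega

lemma sum_split {F : ℕ → ℕ} {M : ℕ} (hrM : r ≤ M) :
    ∑ x ∈ Finset.Icc 0 M, F x
      = ∑ x ∈ Finset.Icc 0 r, F x + ∑ x ∈ Finset.Icc (r+1) M, F x := by
  have hdisj : Disjoint (Finset.Icc 0 r) (Finset.Icc (r+1) M) := by
    rw [Finset.disjoint_left]
    intro a ha hb
    simp only [mem_Icc] at ha hb
    omega
  have hu : Finset.Icc 0 r ∪ Finset.Icc (r+1) M = Finset.Icc 0 M := by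
    ext x
    simp only [mem_Icc, mem_union]
    omega
  rw [← hu, Finset.sum_union hdisj]

lemma sum_Icc0 {F : ℕ → ℕ} (h0 : F 0 = 0) :
    ∑ x ∈ Finset.Icc 0 r, F x = ∑ x ∈ Finset.Icc 1 r, F x := by
  have : Finset.Icc 0 r = insert 0 (Finset.Icc 1 r) := by
    ext x; simp only [mem_Icc, mem_insert]; omega
  rw [this, Finset.sum_insert (by simp), h0, zero_add]

omit hαdec hαpos in
lemma double_count {M j : ℕ} (hb : ∀ i ∈ Finset.Icc 1 r, α i + i ≤ M) (hj : j ≤ r) :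
    ∑ x ∈ Finset.Icc (r+1) M, ((Finset.Icc 1 j).filter fun i => x ≤ α i + i).card
      = ∑ i ∈ Finset.Icc 1 j, (α i + i - r) := by
  simp only [Finset.card_filter]
  rw [Finset.sum_comm]
  apply Finset.sum_congr rfl
  intro i hi
  have hi' := mem_Icc.mp hi
  have hiM : α i + i ≤ M := hb i (mem_Icc.mpr ⟨hi'.1, by omega⟩)
  rw [← Finset.card_filter, count_Icc_le hiM]

include hαdec hαpos in
lemma partSum_formula {M j : ℕ} (hb : ∀ i ∈ Finset.Icc 1 r, α i + i ≤ M) (hrM : r ≤ M)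
    (hj : j ≤ r) :
    partSum (twoConj r α) j = ∑ i ∈ Finset.Icc 1 j, (α i + i) := by
  rw [partSum_eq_sum (twoConj_zero_of_gt hb hrM) j, sum_split hrM,
    sum_Icc0 (by simp [twoConj])]
  have h1 : ∑ x ∈ Finset.Icc 1 r, min (twoConj r α x) j = r * j := by
    have hval : ∀ x ∈ Finset.Icc 1 r, min (twoConj r α x) j = j := by
      intro x hx
      have hx' := mem_Icc.mp hx
      rw [twoConj_small hx'.1 hx'.2]
      have hax : 0 < α x := hαpos x hx'.1 hx'.2
      rcases le_or_gt x j with h | h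
      · have := alpha_mono hαdec x j hx'.1 h hj
        have := hαpos j (by omega) hj
        omega
      · omega
    rw [Finset.sum_congr rfl hval, Finset.sum_const, Nat.card_Icc, smul_eq_mul]
    have : r + 1 - 1 = r := by omega
    rw [this, Nat.mul_comm]
  have h2 : ∑ x ∈ Finset.Icc (r+1) M, min (twoConj r α x) j
      = ∑ i ∈ Finset.Icc 1 j, (α i + i - r) := by
    rw [Finset.sum_congr rfl (fun x hx => twoConj_min_card hαdec (by
        have := mem_Icc.mp hx; omega) hj)]
    exact double_count hb hj
  rw [h1, h2]
  have h3 : ∑ i ∈ Finset.Icc 1 j, (α i + i) = ∑ i ∈ Finset.Icc 1 j, (r + (α i + i - r)) := by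
    apply Finset.sum_congr rfl
    intro i hi
    have hi' := mem_Icc.mp hi
    have := alpha_lb hαdec hαpos i hi'.1 (by omega)
    omega
  rw [h3, Finset.sum_add_distrib, Finset.sum_const, Nat.card_Icc, smul_eq_mul]
  have : j + 1 - 1 = j := by omega
  rw [this, Nat.mul_comm]

end

lemma gauss_sum (r : ℕ) : ∑ i ∈ Finset.Icc 1 r, ((i - 1) + i) = r * r := by
  induction r with
  | zero => simp
  | succ m ih =>
    rw [Finset.sum_Icc_succ_top (by omega : 1 ≤ m + 1), ih]
    have h1 : m + 1 - 1 = m := by omega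
    rw [h1]
    ring

section
variable {r : ℕ} {α : ℕ → ℕ}
  (hαdec : ∀ i j : ℕ, 1 ≤ i → i < j → j ≤ r → α j < α i)
  (hαpos : ∀ i : ℕ, 1 ≤ i → i ≤ r → 0 < α i)

include hαdec hαpos in
lemma total_formula {M : ℕ} (hb : ∀ i ∈ Finset.Icc 1 r, α i + i ≤ M) (hrM : r ≤ M) :
    ∑ᶠ x, twoConj r α x = 2 * (∑ i ∈ Finset.Icc 1 r, α i) := by
  rw [finsum_eq_sum' (twoConj_zero_of_gt hb hrM), sum_split hrM,
    sum_Icc0 (by simp [twoConj])]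
  have e1 : ∑ x ∈ Finset.Icc 1 r, twoConj r α x
      = (∑ i ∈ Finset.Icc 1 r, α i) + ∑ i ∈ Finset.Icc 1 r, (i - 1) := by
    rw [← Finset.sum_add_distrib]
    apply Finset.sum_congr rfl
    intro x hx
    have hx' := mem_Icc.mp hx
    rw [twoConj_small hx'.1 hx'.2]
    have := hαpos x hx'.1 hx'.2
    omega
  have e2 : ∑ x ∈ Finset.Icc (r+1) M, twoConj r α x
      = ∑ i ∈ Finset.Icc 1 r, (α i + i - r) := by
    rw [Finset.sum_congr rfl (fun x hx => twoConj_large (by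
        have := mem_Icc.mp hx; omega))]
    exact double_count hb le_rfl
  have e3 : (∑ i ∈ Finset.Icc 1 r, (α i + i - r)) + r * r
      = (∑ i ∈ Finset.Icc 1 r, α i) + ∑ i ∈ Finset.Icc 1 r, i := by
    have : r * r = ∑ _i ∈ Finset.Icc 1 r, r := by
      rw [Finset.sum_const, Nat.card_Icc, smul_eq_mul]
      have h1 : r + 1 - 1 = r := by omega
      rw [h1]
    rw [this, ← Finset.sum_add_distrib, ← Finset.sum_add_distrib]
    apply Finset.sum_congr rfl
    intro i hi
    have hi' := mem_Icc.mp hi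
    have := alpha_lb hαdec hαpos i hi'.1 hi'.2
    omega
  have e4 : (∑ i ∈ Finset.Icc 1 r, (i - 1)) + ∑ i ∈ Finset.Icc 1 r, i = r * r := by
    rw [← Finset.sum_add_distrib]
    exact gauss_sum r
  rw [e1, e2]
  generalize hR : r * r = R at e3 e4
  omega

end

section
variable {r : ℕ} {α : ℕ → ℕ}
  (hαdec : ∀ i j : ℕ, 1 ≤ i → i < j → j ≤ r → α j < α i)
  (hαpos : ∀ i : ℕ, 1 ≤ i → i ≤ r → 0 < α i)

include hαdec hαpos in
lemma twoConj_mono : ∀ i j : ℕ, 1 ≤ i → i ≤ j → twoConj r α j ≤ twoConj r α i := by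
  intro i j hi hij
  rcases le_or_gt j r with hjr | hjr
  · rw [twoConj_small hi (by omega), twoConj_small (by omega) hjr]
    have := alpha_mono hαdec i j hi hij hjr
    omega
  · rcases le_or_gt i r with hir | hir
    · rw [twoConj_small hi hir, twoConj_large hjr]
      have h1 : ((Finset.Icc 1 r).filter fun i' => j ≤ α i' + i').card ≤ r := by
        calc ((Finset.Icc 1 r).filter fun i' => j ≤ α i' + i').card
            ≤ (Finset.Icc 1 r).card := Finset.card_le_card (Finset.filter_subset _ _)
          _ = r := by rw [Nat.card_Icc]; omega
      have := alpha_lb hαdec hαpos i hi hir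
      omega
    · rw [twoConj_large hjr, twoConj_large hir]
      apply Finset.card_le_card
      intro a ha
      simp only [mem_filter] at ha ⊢
      exact ⟨ha.1, by omega⟩

end

lemma duality {f g : ℕ → ℕ} {M : ℕ} (hf0 : f 0 = 0) (hg0 : g 0 = 0)
    (hfM : ∀ x, M < x → f x = 0) (hgM : ∀ x, M < x → g x = 0)
    (hgmono : ∀ i j : ℕ, 1 ≤ i → i ≤ j → g j ≤ g i)
    (htot : ∑ x ∈ Finset.Icc 0 M, g x = ∑ x ∈ Finset.Icc 0 M, f x)
    (hdom : ∀ j : ℕ, partSum g j ≤ partSum f j) (k : ℕ) (hkM : k ≤ M) :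
    ∑ x ∈ Finset.Icc 1 k, f x ≤ ∑ x ∈ Finset.Icc 1 k, g x := by
  set j := g (k + 1) with hj
  have h1 : partSum g j = k * j + ∑ x ∈ Finset.Icc (k+1) M, g x := by
    rw [partSum_eq_sum hgM j, sum_split hkM, sum_Icc0 (by simp [hg0])]
    congr 1
    · have hval : ∀ x ∈ Finset.Icc 1 k, min (g x) j = j := by
        intro x hx
        have hx' := mem_Icc.mp hx
        have := hgmono x (k+1) hx'.1 (by omega)
        omega
      rw [Finset.sum_congr rfl hval, Finset.sum_const, Nat.card_Icc, smul_eq_mul]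
      have : k + 1 - 1 = k := by omega
      rw [this, Nat.mul_comm]
    · apply Finset.sum_congr rfl
      intro x hx
      have hx' := mem_Icc.mp hx
      have := hgmono (k+1) x (by omega) hx'.1
      omega
  have h2 : partSum f j + ∑ x ∈ Finset.Icc 1 k, f x
      ≤ k * j + ∑ x ∈ Finset.Icc 0 M, f x := by
    rw [partSum_eq_sum hfM j, sum_split hkM, sum_Icc0 (by simp [hf0]),
      sum_split (F := f) hkM, sum_Icc0 (F := f) hf0]
    have b1 : ∑ x ∈ Finset.Icc 1 k, min (f x) j ≤ k * j := by
      calc ∑ x ∈ Finset.Icc 1 k, min (f x) j ≤ ∑ _x ∈ Finset.Icc 1 k, j :=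
            Finset.sum_le_sum (fun x _ => min_le_right _ _)
        _ = k * j := by
            rw [Finset.sum_const, Nat.card_Icc, smul_eq_mul]
            have : k + 1 - 1 = k := by omega
            rw [this, Nat.mul_comm]
    have b2 : ∑ x ∈ Finset.Icc (k+1) M, min (f x) j ≤ ∑ x ∈ Finset.Icc (k+1) M, f x :=
      Finset.sum_le_sum (fun x _ => min_le_left _ _)
    omega
  have h3 : ∑ x ∈ Finset.Icc 0 M, g x
      = ∑ x ∈ Finset.Icc 1 k, g x + ∑ x ∈ Finset.Icc (k+1) M, g x := by
    rw [sum_split (F := g) hkM, sum_Icc0 (F := g) hg0]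
  have h4 := hdom j
  generalize hkj : k * j = KJ at h1 h2
  omega

lemma main_half {n r s : ℕ} {α β : ℕ → ℕ}
    (hαdec : ∀ i j : ℕ, 1 ≤ i → i < j → j ≤ r → α j < α i)
    (hαpos : ∀ i : ℕ, 1 ≤ i → i ≤ r → 0 < α i)
    (hαsum : (∑ i ∈ Finset.Icc 1 r, α i) = n)
    (hβdec : ∀ i j : ℕ, 1 ≤ i → i < j → j ≤ s → β j < β i)
    (hβpos : ∀ i : ℕ, 1 ≤ i → i ≤ s → 0 < β i)
    (hβsum : (∑ i ∈ Finset.Icc 1 s, β i) = n)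
    {j₀ : ℕ} (hj1 : 1 ≤ j₀) (hjr : j₀ ≤ r) (hjs : j₀ ≤ s)
    (hagree : ∀ i : ℕ, 1 ≤ i → i < j₀ → α i = β i) (hlt : β j₀ < α j₀) :
    ¬ ConjDom (twoConj r α) (twoConj s β) ∧ ¬ ConjDom (twoConj s β) (twoConj r α) := by
  set M := n + r + s with hM
  have hbα : ∀ i ∈ Finset.Icc 1 r, α i + i ≤ M := by
    intro i hi
    have hi' := mem_Icc.mp hi
    have : α i ≤ ∑ i ∈ Finset.Icc 1 r, α i :=
      Finset.single_le_sum (fun i _ => Nat.zero_le _) hi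
    omega
  have hbβ : ∀ i ∈ Finset.Icc 1 s, β i + i ≤ M := by
    intro i hi
    have hi' := mem_Icc.mp hi
    have : β i ≤ ∑ i ∈ Finset.Icc 1 s, β i :=
      Finset.single_le_sum (fun i _ => Nat.zero_le _) hi
    omega
  have hrM : r ≤ M := by omega
  have hsM : s ≤ M := by omega
  obtain ⟨m, hm⟩ : ∃ m, j₀ = m + 1 := ⟨j₀ - 1, by omega⟩
  constructor
  · intro h
    have hdom := h j₀
    rw [partSum_formula hαdec hαpos hbα hrM hjr,
      partSum_formula hβdec hβpos hbβ hsM hjs] at hdom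
    rw [hm, Finset.sum_Icc_succ_top (by omega : 1 ≤ m + 1),
      Finset.sum_Icc_succ_top (by omega : 1 ≤ m + 1)] at hdom
    have heq : ∑ i ∈ Finset.Icc 1 m, (α i + i) = ∑ i ∈ Finset.Icc 1 m, (β i + i) := by
      apply Finset.sum_congr rfl
      intro i hi
      have hi' := mem_Icc.mp hi
      rw [hagree i hi'.1 (by omega)]
    rw [← hm] at hdom
    omega
  · intro h
    have hd := duality (f := twoConj r α) (g := twoConj s β) (M := M)
      (by simp [twoConj]) (by simp [twoConj])
      (twoConj_zero_of_gt hbα hrM) (twoConj_zero_of_gt hbβ hsM)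
      (twoConj_mono hβdec hβpos)
      (by rw [← finsum_eq_sum' (twoConj_zero_of_gt hbβ hsM),
            ← finsum_eq_sum' (twoConj_zero_of_gt hbα hrM),
            total_formula hβdec hβpos hbβ hsM, total_formula hαdec hαpos hbα hrM,
            hαsum, hβsum])
      h j₀ (by omega)
    have e1 : ∑ x ∈ Finset.Icc 1 j₀, twoConj r α x
        = ∑ x ∈ Finset.Icc 1 j₀, (α x + x - 1) := by
      apply Finset.sum_congr rfl
      intro x hx
      have hx' := mem_Icc.mp hx
      exact twoConj_small hx'.1 (by omega)
    have e2 : ∑ x ∈ Finset.Icc 1 j₀, twoConj s β x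
        = ∑ x ∈ Finset.Icc 1 j₀, (β x + x - 1) := by
      apply Finset.sum_congr rfl
      intro x hx
      have hx' := mem_Icc.mp hx
      exact twoConj_small hx'.1 (by omega)
    rw [e1, e2, hm, Finset.sum_Icc_succ_top (by omega : 1 ≤ m + 1),
      Finset.sum_Icc_succ_top (by omega : 1 ≤ m + 1)] at hd
    have heq : ∑ i ∈ Finset.Icc 1 m, (α i + i - 1) = ∑ i ∈ Finset.Icc 1 m, (β i + i - 1) := by
      apply Finset.sum_congr rfl
      intro i hi
      have hi' := mem_Icc.mp hi
      rw [hagree i hi'.1 (by omega)]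
    rw [← hm] at hd
    have hβj : 0 < β j₀ ∨ True := Or.inr trivial
    omega

lemma sums_agree {n r s : ℕ} {α β : ℕ → ℕ} (hrs : r ≤ s)
    (hβpos : ∀ i : ℕ, 1 ≤ i → i ≤ s → 0 < β i)
    (hαsum : (∑ i ∈ Finset.Icc 1 r, α i) = n)
    (hβsum : (∑ i ∈ Finset.Icc 1 s, β i) = n)
    (hag : ∀ i : ℕ, 1 ≤ i → i ≤ r → α i = β i) : r = s := by
  by_contra hne
  have hlt : r < s := by omega
  have hsplit : ∑ i ∈ Finset.Icc 1 s, β i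
      = ∑ i ∈ Finset.Icc 1 r, β i + ∑ i ∈ Finset.Icc (r+1) s, β i := by
    have hdisj : Disjoint (Finset.Icc 1 r) (Finset.Icc (r+1) s) := by
      rw [Finset.disjoint_left]
      intro a ha hb
      simp only [mem_Icc] at ha hb
      omega
    have hu : Finset.Icc 1 r ∪ Finset.Icc (r+1) s = Finset.Icc 1 s := by
      ext x
      simp only [mem_Icc, mem_union]
      omega
    rw [← hu, Finset.sum_union hdisj]
  have heq : ∑ i ∈ Finset.Icc 1 r, β i = n := by
    rw [← hαsum]
    apply Finset.sum_congr rfl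
    intro i hi
    have hi' := mem_Icc.mp hi
    exact (hag i hi'.1 hi'.2).symm
  have hzero : ∑ i ∈ Finset.Icc (r+1) s, β i = 0 := by omega
  have hmem : r + 1 ∈ Finset.Icc (r+1) s := mem_Icc.mpr ⟨le_rfl, by omega⟩
  have := (Finset.sum_eq_zero_iff.mp hzero) (r+1) hmem
  have := hβpos (r+1) (by omega) (by omega)
  omega

/-- If `α` and `β` are distinct partitions of `n` into distinct parts,
then `2[α]` and `2[β]` are incomparable in the dominance order. -/
theorem stmt_13 (n r s : ℕ) (α β : ℕ → ℕ)
    (hαdec : ∀ i j : ℕ, 1 ≤ i → i < j → j ≤ r → α j < α i)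
    (hαpos : ∀ i : ℕ, 1 ≤ i → i ≤ r → 0 < α i)
    (hαsum : (∑ i ∈ Finset.Icc 1 r, α i) = n)
    (hβdec : ∀ i j : ℕ, 1 ≤ i → i < j → j ≤ s → β j < β i)
    (hβpos : ∀ i : ℕ, 1 ≤ i → i ≤ s → 0 < β i)
    (hβsum : (∑ i ∈ Finset.Icc 1 s, β i) = n)
    (hne : ¬ (r = s ∧ ∀ i ∈ Finset.Icc 1 r, α i = β i)) :
    ¬ ConjDom (twoConj r α) (twoConj s β) ∧ ¬ ConjDom (twoConj s β) (twoConj r α) := by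
  have hex : ∃ i : ℕ, 1 ≤ i ∧ i ≤ r ∧ i ≤ s ∧ α i ≠ β i := by
    by_contra hno
    push_neg at hno
    have hag : ∀ i : ℕ, 1 ≤ i → i ≤ r → i ≤ s → α i = β i := by
      intro i h1 h2 h3
      by_contra hne'
      exact hne' (by by_contra hc; exact hc (hno i h1 h2 h3))
    rcases le_or_gt r s with hrs | hsr
    · have := sums_agree hrs hβpos hαsum hβsum (fun i h1 h2 => hag i h1 h2 (by omega))
      exact hne ⟨this, fun i hi => by
        have hi' := mem_Icc.mp hi
        exact hag i hi'.1 hi'.2 (by omega)⟩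
    · have := sums_agree (by omega : s ≤ r) hαpos hβsum hαsum
        (fun i h1 h2 => (hag i h1 (by omega) h2).symm)
      omega
  classical
  let j₀ := Nat.find hex
  have hspec := Nat.find_spec hex
  have hmin : ∀ i : ℕ, i < j₀ → ¬(1 ≤ i ∧ i ≤ r ∧ i ≤ s ∧ α i ≠ β i) :=
    fun i hi => Nat.find_min hex hi
  obtain ⟨hj1, hjr, hjs, hjne⟩ := hspec
  have hagree : ∀ i : ℕ, 1 ≤ i → i < (j₀ : ℕ) → α i = β i := by
    intro i h1 h2
    by_contra hc
    exact hmin i h2 ⟨h1, by omega, by omega, hc⟩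
  rcases Ne.lt_or_gt hjne with hlt | hlt
  · have := main_half hβdec hβpos hβsum hαdec hαpos hαsum hj1 hjs hjr
      (fun i h1 h2 => (hagree i h1 h2).symm) hlt
    exact ⟨this.2, this.1⟩
  · exact main_half hαdec hαpos hαsum hβdec hβpos hβsum hj1 hjr hjs hagree hlt
end

section
/- Let m ≥ 1 and let ν be a partition of n ≥ 1 with conjugate ν', largest part ℓ = ν_1, and exactly k nonzero parts. For 1 ≤ i ≤ ℓ let Q_i be the multiset family { M_1, …, M_{ν'_i} }, where M_j is the multiset consisting of m−1 copies of 1 together with one copy of j. Then (Q_1,…,Q_ℓ) is a closed multiset family tuple with each Q_i of shape (m^{ν'_i}); its type λ is defined and its conjugate is λ' = ((m−1)n + ν_1, ν_2, …, ν_k). Moreover, for every multiset family tuple (R_1,…,R_ℓ) with each R_i of shape (m^{ν'_i}) whose type μ is defined, the conjugate μ' is lexicographically at most ((m−1)n + ν_1, ν_2, …, ν_k). -/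
/-- The multiplicity of `i` in a multiset family `Q`: the total number of occurrences of `i`,
counted with multiplicity, among the multisets in `Q`. -/
def msetMult (Q : Finset (Multiset ℕ)) (i : ℕ) : ℕ := ∑ S ∈ Q, S.count i

/-- `Q` is a multiset family of shape `(m^n)`: a collection of `n` distinct multisets of
cardinality `m` with elements in the positive integers. -/
def IsMsetFamily (m n : ℕ) (Q : Finset (Multiset ℕ)) : Prop :=
  Q.card = n ∧ ∀ S ∈ Q, Multiset.card S = m ∧ ∀ x ∈ S, 1 ≤ x

/-- `B` majorizes `A` (written `A ⪯ B`) for multisets: the `r`-th smallest element of `A`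
is at most the `r`-th smallest element of `B`. -/
def MsetMaj (A B : Multiset ℕ) : Prop :=
  ∀ r : ℕ, (A.sort (· ≤ ·)).getD r 0 ≤ (B.sort (· ≤ ·)).getD r 0

/-- A multiset family (of cardinality-`m` multisets) is closed if it is downward closed
under majorization. -/
def ClosedMsetFam (m : ℕ) (Q : Finset (Multiset ℕ)) : Prop :=
  ∀ B ∈ Q, ∀ A : Multiset ℕ, Multiset.card A = m → (∀ x ∈ A, 1 ≤ x) → MsetMaj A B → A ∈ Q

/-- The total multiplicity of `i` over a tuple of multiset families. -/
def msetTupMult {k : ℕ} (Q : Fin k → Finset (Multiset ℕ)) (i : ℕ) : ℕ := ∑ j, msetMult (Q j) i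
/-- The conjugate of the partition `ν` (with at most `k` parts): `ν'_i = #{j ≤ k : ν_j ≥ i}`. -/
def nuConj (k : ℕ) (nu : ℕ → ℕ) (i : ℕ) : ℕ := ((Finset.Icc 1 k).filter fun j => i ≤ nu j).card

/-- The multiset family `{M_1, …, M_c}` where `M_j` consists of `m-1` copies of `1`
together with one copy of `j`. -/
def onesFam (m c : ℕ) : Finset (Multiset ℕ) :=
  (Finset.Icc 1 c).image fun j => (j ::ₘ Multiset.replicate (m - 1) 1)

/-- The total multiplicity of `x` over the tuple `(Q_1, …, Q_ℓ)`. -/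
def tupMultIcc (l : ℕ) (Q : ℕ → Finset (Multiset ℕ)) (x : ℕ) : ℕ :=
  ∑ i ∈ Finset.Icc 1 l, msetMult (Q i) x

section StmtAux

lemma sum_count_le' (t : Finset ℕ) (S : Multiset ℕ) :
    ∑ x ∈ t, S.count x ≤ Multiset.card S := by
  classical
  rw [← Finset.sum_filter_of_ne (p := (· ∈ S.toFinset))
    (fun x _ hx => by
      simpa [Multiset.mem_toFinset] using Multiset.count_pos.mp (Nat.pos_of_ne_zero hx))]
  calc ∑ x ∈ t.filter (· ∈ S.toFinset), S.count x
      ≤ ∑ x ∈ S.toFinset, S.count x :=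
        Finset.sum_le_sum_of_subset (fun x hx => (Finset.mem_filter.mp hx).2)
    _ = Multiset.card S := Multiset.toFinset_sum_count_eq S

lemma mem_onesFam' {m c : ℕ} {S : Multiset ℕ} :
    S ∈ onesFam m c ↔ ∃ j, (1 ≤ j ∧ j ≤ c) ∧ S = j ::ₘ Multiset.replicate (m-1) 1 := by
  simp [onesFam, Finset.mem_image, Finset.mem_Icc, eq_comm, and_assoc]

lemma sorted_ones' (m v : ℕ) (hv : 1 ≤ v) :
    (v ::ₘ Multiset.replicate (m-1) 1).sort (· ≤ ·) = List.replicate (m-1) 1 ++ [v] := by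
  apply (fun (hp : List.Perm _ (List.replicate (m-1) 1 ++ [v])) h1 h2 =>
    List.Perm.eq_of_pairwise' (r := ((· ≤ ·) : ℕ → ℕ → Prop)) h1 h2 hp)
  · rw [← Multiset.coe_eq_coe, Multiset.sort_eq]
    rw [show ((List.replicate (m-1) 1 ++ [v] : List ℕ) : Multiset ℕ)
        = (List.replicate (m-1) 1 : List ℕ) + ([v] : List ℕ) from rfl]
    rw [Multiset.coe_replicate]
    rw [show (([v] : List ℕ) : Multiset ℕ) = {v} from rfl]
    rw [add_comm, Multiset.singleton_add]
  · exact Multiset.pairwise_sort _ _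
  · rw [List.pairwise_append]
    refine ⟨List.pairwise_replicate.2 (by simp), by simp, ?_⟩
    intro a ha b hb
    simp [List.eq_of_mem_replicate ha] at *
    omega

lemma onesFam_closed' (m c : ℕ) (hm : 1 ≤ m) : ClosedMsetFam m (onesFam m c) := by
  intro B hB A hcard hpos hmaj
  rw [mem_onesFam'] at hB
  obtain ⟨v, ⟨hv1, hvc⟩, rfl⟩ := hB
  set L := A.sort (· ≤ ·) with hLdef
  have hlen : L.length = m := by rw [hLdef, Multiset.length_sort, hcard]
  have hmem : ∀ x ∈ L, 1 ≤ x := fun x hx => hpos x (by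
    rwa [hLdef, Multiset.mem_sort] at hx)
  have hsortB := sorted_ones' m v hv1
  have hBgetD : ∀ r, r < m - 1 →
      ((v ::ₘ Multiset.replicate (m-1) 1).sort (· ≤ ·)).getD r 0 = 1 := by
    intro r hr
    rw [hsortB, List.getD_append _ _ _ _ (by simpa using hr),
      List.getD_eq_getElem _ _ (by simpa using hr), List.getElem_replicate]
  have hBlast : ((v ::ₘ Multiset.replicate (m-1) 1).sort (· ≤ ·)).getD (m-1) 0 = v := by
    rw [hsortB, List.getD_append_right _ _ _ _ (by simp)]
    simp
  have hsmall : ∀ r, r < m - 1 → L.getD r 0 = 1 := by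
    intro r hr
    have h1 := hmaj r
    rw [hBgetD r hr, ← hLdef] at h1
    have h2 : 1 ≤ L.getD r 0 := by
      rw [List.getD_eq_getElem _ _ (by omega)]
      exact hmem _ (List.getElem_mem _)
    omega
  set w := L.getD (m-1) 0 with hwdef
  have hwv : w ≤ v := by have := hmaj (m-1); rwa [hBlast] at this
  have hw1 : 1 ≤ w := by
    rw [hwdef, List.getD_eq_getElem _ _ (by omega)]
    exact hmem _ (List.getElem_mem _)
  have htake : L.take (m-1) = List.replicate (m-1) 1 := by
    rw [List.eq_replicate_iff]
    constructor
    · rw [List.length_take, hlen]; omega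
    · intro b hb
      obtain ⟨i, hi, hib⟩ := List.mem_iff_getElem.mp hb
      have hi' : i < m - 1 := by simpa [List.length_take, hlen] using hi
      rw [List.getElem_take] at hib
      rw [← hib, ← List.getD_eq_getElem _ 0 (by omega)]
      exact hsmall i hi'
  have hdlen : (L.drop (m-1)).length = 1 := by rw [List.length_drop, hlen]; omega
  have hdrop : L.drop (m-1) = [w] := by
    obtain ⟨a, ha⟩ := List.length_eq_one_iff.mp hdlen
    have h0 : (L.drop (m-1)).getD 0 0 = L.getD (m-1) 0 := by
      rw [List.getD_eq_getElem (L.drop (m-1)) 0 (n := 0) (by omega),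
        List.getD_eq_getElem L 0 (n := m-1) (by rw [hlen]; omega)]
      simpa using List.getElem_drop (L := L) (i := m-1) (j := 0) (h := by omega)
    rw [ha] at h0
    simp only [List.getD_cons_zero] at h0
    rw [ha, h0, ← hwdef]
  have hLeq : L = List.replicate (m-1) 1 ++ [w] := by
    conv_lhs => rw [← List.take_append_drop (m-1) L]
    rw [htake, hdrop]
  have hA : A = w ::ₘ Multiset.replicate (m-1) 1 := by
    have h1 : (L : Multiset ℕ) = A := by rw [hLdef]; exact Multiset.sort_eq _ _
    rw [← h1, hLeq]
    rw [show ((List.replicate (m-1) 1 ++ [w] : List ℕ) : Multiset ℕ)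
        = (List.replicate (m-1) 1 : List ℕ) + ([w] : List ℕ) from rfl]
    rw [Multiset.coe_replicate, show (([w] : List ℕ) : Multiset ℕ) = {w} from rfl,
      add_comm, Multiset.singleton_add]
  rw [mem_onesFam']
  exact ⟨w, ⟨hw1, by omega⟩, hA⟩

lemma onesFam_inj' (m c : ℕ) :
    Set.InjOn (fun j => (j ::ₘ Multiset.replicate (m - 1) 1)) (Finset.Icc 1 c) := by
  intro a _ b _ h
  exact (Multiset.cons_inj_left _).mp h

lemma onesFam_isFamily' (m c : ℕ) (hm : 1 ≤ m) : IsMsetFamily m c (onesFam m c) := by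
  constructor
  · rw [onesFam, Finset.card_image_of_injOn (onesFam_inj' m c), Nat.card_Icc]
    omega
  · intro S hS
    simp only [onesFam, Finset.mem_image, Finset.mem_Icc] at hS
    obtain ⟨j, ⟨hj1, hjc⟩, rfl⟩ := hS
    constructor
    · simp; omega
    · intro x hx
      rcases Multiset.mem_cons.mp hx with h | h
      · omega
      · rw [Multiset.eq_of_mem_replicate h]

lemma msetMult_onesFam_one' (m c : ℕ) (hc : 1 ≤ c) :
    msetMult (onesFam m c) 1 = (m-1)*c + 1 := by
  rw [msetMult, onesFam, Finset.sum_image (onesFam_inj' m c)]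
  have : ∀ j ∈ Finset.Icc 1 c, (j ::ₘ Multiset.replicate (m-1) 1).count 1
      = (m-1) + if j = 1 then 1 else 0 := by
    intro j _
    rw [Multiset.count_cons, Multiset.count_replicate]
    simp [eq_comm]
  rw [Finset.sum_congr rfl this, Finset.sum_add_distrib, Finset.sum_const, Nat.card_Icc,
    Finset.sum_ite_eq' (Finset.Icc 1 c) 1 (fun _ => 1)]
  simp [Finset.mem_Icc, hc, smul_eq_mul, Nat.mul_comm]

lemma msetMult_onesFam_ge2' (m c x : ℕ) (hx : 2 ≤ x) :
    msetMult (onesFam m c) x = if x ≤ c then 1 else 0 := by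
  rw [msetMult, onesFam, Finset.sum_image (onesFam_inj' m c)]
  have : ∀ j ∈ Finset.Icc 1 c, (j ::ₘ Multiset.replicate (m-1) 1).count x
      = if j = x then 1 else 0 := by
    intro j _
    rw [Multiset.count_cons, Multiset.count_replicate]
    have : ¬ (1 = x) := by omega
    simp [this, eq_comm]
  rw [Finset.sum_congr rfl this, Finset.sum_ite_eq' (Finset.Icc 1 c) x (fun _ => 1)]
  simp [Finset.mem_Icc, show 1 ≤ x by omega]

lemma mult_one_le' (m c : ℕ) (Q : Finset (Multiset ℕ)) (hQ : IsMsetFamily m c Q) :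
    msetMult Q 1 ≤ (m-1)*c + 1 := by
  classical
  obtain ⟨hcard, hS⟩ := hQ
  have key : ∀ S ∈ Q, S.count 1 ≤ (m-1) + if S = Multiset.replicate m 1 then 1 else 0 := by
    intro S hSQ
    by_cases h : S = Multiset.replicate m 1
    · simp [h, Multiset.count_replicate]; omega
    · simp only [h, if_neg, if_false, Nat.add_zero]
      by_contra hc
      push_neg at hc
      have h1 : S.count 1 ≤ Multiset.card S := Multiset.count_le_card _ _
      have hcm : Multiset.card S = m := (hS S hSQ).1
      have : S.count 1 = Multiset.card S := by omega
      have := Multiset.count_eq_card.mp this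
      exact h (Multiset.eq_replicate.mpr ⟨hcm, fun b hb => (this b hb).symm⟩)
  calc msetMult Q 1 ≤ ∑ S ∈ Q, ((m-1) + if S = Multiset.replicate m 1 then 1 else 0) :=
        Finset.sum_le_sum key
    _ = (m-1)*c + ∑ S ∈ Q, (if S = Multiset.replicate m 1 then 1 else 0) := by
        rw [Finset.sum_add_distrib, Finset.sum_const, hcard, smul_eq_mul, Nat.mul_comm]
    _ ≤ (m-1)*c + 1 := by
        rw [Finset.sum_ite_eq' Q (Multiset.replicate m 1) (fun _ => 1)]
        split <;> omega

lemma struct' (m c : ℕ) (hm : 1 ≤ m) (Q : Finset (Multiset ℕ)) (hQ : IsMsetFamily m c Q)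
    (heq : msetMult Q 1 = (m-1)*c + 1) :
    (∀ x, 2 ≤ x → msetMult Q x ≤ 1) ∧
    (∀ j : ℕ, ∑ x ∈ Finset.Icc 2 j, msetMult Q x ≤ c - 1) := by
  classical
  obtain ⟨hcard, hS⟩ := hQ
  set Z := Q.filter (fun S => S.count 1 = m) with hZdef
  have hZsub : Z ⊆ Q := Finset.filter_subset _ _
  have hZrep : ∀ S ∈ Z, S = Multiset.replicate m 1 := by
    intro S hSZ
    rw [hZdef, Finset.mem_filter] at hSZ
    have hcm : Multiset.card S = m := (hS S hSZ.1).1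
    have := Multiset.count_eq_card.mp (by rw [hSZ.2, hcm])
    exact Multiset.eq_replicate.mpr ⟨hcm, fun b hb => (this b hb).symm⟩
  have hZcard : Z.card ≤ 1 := by
    apply Finset.card_le_one.mpr
    intro a ha b hb
    rw [hZrep a ha, hZrep b hb]
  have hoffZ : ∀ S ∈ Q \ Z, S.count 1 ≤ m - 1 := by
    intro S hSQ
    rw [Finset.mem_sdiff, hZdef, Finset.mem_filter] at hSQ
    have h1 : S.count 1 ≤ Multiset.card S := Multiset.count_le_card _ _
    have hcm : Multiset.card S = m := (hS S hSQ.1).1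
    have : ¬ (S.count 1 = m) := fun h => hSQ.2 ⟨hSQ.1, h⟩
    omega
  have hsplit : ∑ S ∈ Q \ Z, S.count 1 + ∑ S ∈ Z, S.count 1 = msetMult Q 1 :=
    Finset.sum_sdiff hZsub
  have hZsum : ∑ S ∈ Z, S.count 1 = m * Z.card := by
    rw [Finset.sum_congr rfl (fun S hSZ => (Finset.mem_filter.mp hSZ).2), Finset.sum_const,
      smul_eq_mul, Nat.mul_comm]
  have hQZcard : (Q \ Z).card = c - Z.card := by
    rw [Finset.card_sdiff_of_subset hZsub, hcard]
  have hoffsum : ∑ S ∈ Q \ Z, S.count 1 ≤ (m-1) * (c - Z.card) := by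
    calc ∑ S ∈ Q \ Z, S.count 1 ≤ ∑ _S ∈ Q \ Z, (m-1) := Finset.sum_le_sum hoffZ
      _ = (m-1) * (c - Z.card) := by rw [Finset.sum_const, smul_eq_mul, Nat.mul_comm, hQZcard]
  have hzc : Z.card ≤ c := hcard ▸ Finset.card_le_card hZsub
  have hZ1 : Z.card = 1 := by
    set z := Z.card
    have hd : c - z + z = c := by omega
    set d := c - z with hddef
    have h1 : (m-1) * (d + z) + 1 ≤ m * z + (m-1) * d := by
      rw [← hd] at heq; rw [← heq, ← hsplit, hZsum]; omega
    have h2 : (m-1) * (d + z) = (m-1)*d + (m-1)*z := by ring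
    have h3 : m * z = (m-1)*z + z := by
      cases m with
      | zero => omega
      | succ mm => simp [Nat.succ_sub_one]; ring
    omega
  have hoffeq : ∀ S ∈ Q \ Z, S.count 1 = m - 1 := by
    have hsum2 : ∑ S ∈ Q \ Z, S.count 1 = ∑ _S ∈ Q \ Z, (m-1) := by
      have hconst : ∑ _S ∈ Q \ Z, (m-1) = (m-1) * (c - 1) := by
        rw [Finset.sum_const, smul_eq_mul, Nat.mul_comm, hQZcard, hZ1]
      rw [hconst]
      have h4 := hsplit
      rw [hZsum, hZ1, heq] at h4
      have hc1 : 1 ≤ c := by omega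
      have e0 : (m-1)*c = (m-1)*(c-1) + (m-1) := by
        conv_lhs => rw [show c = (c-1)+1 by omega]
        ring
      omega
    intro S hSQ
    exact (Finset.sum_eq_sum_iff_of_le hoffZ).mp hsum2 S hSQ
  refine ⟨?_, ?_⟩
  · intro x hx
    have key : ∀ S ∈ Q, S.count x ≤ if S = x ::ₘ Multiset.replicate (m-1) 1 then 1 else 0 := by
      intro S hSQ
      by_cases hz : S ∈ Z
      · have : S.count x = 0 := by
          rw [hZrep S hz, Multiset.count_replicate, if_neg (by omega)]
        omega
      · have hSQZ : S ∈ Q \ Z := Finset.mem_sdiff.mpr ⟨hSQ, hz⟩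
        have hc1 : S.count 1 = m - 1 := hoffeq S hSQZ
        have hcm : Multiset.card S = m := (hS S hSQ).1
        have hsum' : S.count 1 + S.count x ≤ m := by
          have h := sum_count_le' {1, x} S
          rw [Finset.sum_pair (by omega : (1:ℕ) ≠ x)] at h
          omega
        have hcx : S.count x ≤ 1 := by omega
        rcases Nat.lt_or_ge (S.count x) 1 with h | h
        · have : S.count x = 0 := by omega
          omega
        · have hx1 : S.count x = 1 := by omega
          have hle : (x ::ₘ Multiset.replicate (m-1) 1) ≤ S := by
            rw [Multiset.le_iff_count]
            intro y
            rw [Multiset.count_cons, Multiset.count_replicate]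
            rcases eq_or_ne y x with rfl | hyx
            · rw [if_neg (by omega), if_pos rfl]; omega
            · rcases eq_or_ne y 1 with rfl | hy1
              · rw [if_pos rfl, if_neg hyx]; omega
              · rw [if_neg (fun h => hy1 h.symm), if_neg hyx]; omega
          have : S = x ::ₘ Multiset.replicate (m-1) 1 :=
            (Multiset.eq_of_le_of_card_le hle (by simp [hcm]; omega)).symm
          rw [if_pos this]; omega
    calc msetMult Q x ≤ ∑ S ∈ Q, (if S = x ::ₘ Multiset.replicate (m-1) 1 then 1 else 0) :=
          Finset.sum_le_sum key
      _ ≤ 1 := by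
          rw [Finset.sum_ite_eq' Q _ (fun _ => 1)]
          split <;> omega
  · intro j
    have hswap : ∑ x ∈ Finset.Icc 2 j, msetMult Q x
        = ∑ S ∈ Q, ∑ x ∈ Finset.Icc 2 j, S.count x := by
      rw [Finset.sum_comm]
      rfl
    rw [hswap, ← Finset.sum_sdiff hZsub]
    have hZ0 : ∑ S ∈ Z, ∑ x ∈ Finset.Icc 2 j, S.count x = 0 := by
      apply Finset.sum_eq_zero
      intro S hSZ
      apply Finset.sum_eq_zero
      intro x hx
      rw [Finset.mem_Icc] at hx
      rw [hZrep S hSZ, Multiset.count_replicate, if_neg (by omega)]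
    have hoff1 : ∀ S ∈ Q \ Z, ∑ x ∈ Finset.Icc 2 j, S.count x ≤ 1 := by
      intro S hSQZ
      have hc1 : S.count 1 = m - 1 := hoffeq S hSQZ
      have hcm : Multiset.card S = m := (hS S (Finset.mem_sdiff.mp hSQZ).1).1
      have h := sum_count_le' (insert 1 (Finset.Icc 2 j)) S
      rw [Finset.sum_insert (by simp), hcm] at h
      omega
    calc ∑ S ∈ Q \ Z, ∑ x ∈ Finset.Icc 2 j, S.count x
        + ∑ S ∈ Z, ∑ x ∈ Finset.Icc 2 j, S.count x
        ≤ ∑ _S ∈ Q \ Z, 1 + 0 := by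
          rw [hZ0]; exact Nat.add_le_add (Finset.sum_le_sum hoff1) (le_refl 0)
      _ ≤ c - 1 := by rw [Finset.sum_const, smul_eq_mul, hQZcard, hZ1]; omega

section ConjLemmas
variable {k : ℕ} {nu : ℕ → ℕ}
variable (hmono : ∀ i j : ℕ, 1 ≤ i → i ≤ j → nu j ≤ nu i)
variable (hzero : ∀ i : ℕ, k < i → nu i = 0)

include hmono hzero in
lemma conj_iff' {i x : ℕ} (hi : 1 ≤ i) (hx : 1 ≤ x) :
    x ≤ nuConj k nu i ↔ i ≤ nu x := by
  constructor
  · intro h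
    by_contra h'
    push_neg at h'
    have hsub : (Finset.Icc 1 k).filter (fun j => i ≤ nu j) ⊆ Finset.Icc 1 (x-1) := by
      intro j hj
      simp only [Finset.mem_filter, Finset.mem_Icc] at hj ⊢
      rcases Nat.lt_or_ge j x with hc | hc
      · omega
      · have := hmono x j hx hc
        omega
    have := Finset.card_le_card hsub
    rw [Nat.card_Icc] at this
    unfold nuConj at h
    omega
  · intro h
    have hxk : x ≤ k := by
      by_contra hxk
      push_neg at hxk
      have := hzero x hxk
      omega
    have hsub : Finset.Icc 1 x ⊆ (Finset.Icc 1 k).filter (fun j => i ≤ nu j) := by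
      intro j hj
      simp only [Finset.mem_Icc] at hj
      have h1 : nu x ≤ nu j := hmono j x hj.1 hj.2
      simp only [Finset.mem_filter, Finset.mem_Icc]
      omega
    have := Finset.card_le_card hsub
    rw [Nat.card_Icc] at this
    unfold nuConj
    omega

include hmono in
lemma sum_conj' (n : ℕ) (hsum : (∑ i ∈ Finset.Icc 1 k, nu i) = n) :
    ∑ i ∈ Finset.Icc 1 (nu 1), nuConj k nu i = n := by
  unfold nuConj
  have h1 : ∀ i, ((Finset.Icc 1 k).filter fun j => i ≤ nu j).card
      = ∑ j ∈ Finset.Icc 1 k, if i ≤ nu j then 1 else 0 := fun i =>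
    Finset.card_filter _ _
  rw [Finset.sum_congr rfl fun i _ => h1 i, Finset.sum_comm]
  rw [← hsum]
  apply Finset.sum_congr rfl
  intro j hj
  rw [Finset.mem_Icc] at hj
  have hle : nu j ≤ nu 1 := hmono 1 j le_rfl hj.1
  rw [← Finset.card_filter]
  have : (Finset.Icc 1 (nu 1)).filter (fun i => i ≤ nu j) = Finset.Icc 1 (nu j) := by
    ext i
    simp only [Finset.mem_filter, Finset.mem_Icc]
    omega
  rw [this, Nat.card_Icc]
  omega

include hmono hzero in
lemma nu_card_filter' {x : ℕ} (hx : 1 ≤ x) (hxnu : nu x ≤ nu 1) :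
    ((Finset.Icc 1 (nu 1)).filter fun i => x ≤ nuConj k nu i).card = nu x := by
  have hfil : (Finset.Icc 1 (nu 1)).filter (fun i => x ≤ nuConj k nu i)
      = Finset.Icc 1 (nu x) := by
    ext i
    simp only [Finset.mem_filter, Finset.mem_Icc]
    constructor
    · rintro ⟨⟨hi1, hinu⟩, hcon⟩
      exact ⟨hi1, (conj_iff' hmono hzero hi1 hx).mp hcon⟩
    · rintro ⟨hi1, hinu⟩
      exact ⟨⟨hi1, by omega⟩, (conj_iff' hmono hzero hi1 hx).mpr hinu⟩
  rw [hfil, Nat.card_Icc]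
  omega

include hmono hzero in
lemma sum_nu_Icc2' {j : ℕ} (hj : 1 ≤ j) :
    ∑ x ∈ Finset.Icc 2 j, nu x
      = ∑ i ∈ Finset.Icc 1 (nu 1), (min (nuConj k nu i) j - 1) := by
  have h1 : ∀ x ∈ Finset.Icc 2 j,
      nu x = ((Finset.Icc 1 (nu 1)).filter fun i => x ≤ nuConj k nu i).card := by
    intro x hx
    rw [Finset.mem_Icc] at hx
    exact (nu_card_filter' hmono hzero (by omega) (hmono 1 x le_rfl (by omega))).symm
  rw [Finset.sum_congr rfl h1]
  have h2 : ∀ x ∈ Finset.Icc 2 j,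
      ((Finset.Icc 1 (nu 1)).filter fun i => x ≤ nuConj k nu i).card
      = ∑ i ∈ Finset.Icc 1 (nu 1), if x ≤ nuConj k nu i then 1 else 0 := fun x _ =>
    Finset.card_filter _ _
  rw [Finset.sum_congr rfl h2, Finset.sum_comm]
  apply Finset.sum_congr rfl
  intro i hi
  rw [Finset.mem_Icc] at hi
  have hci : 1 ≤ nuConj k nu i := (conj_iff' hmono hzero hi.1 le_rfl).mpr hi.2
  rw [← Finset.card_filter]
  have : (Finset.Icc 2 j).filter (fun x => x ≤ nuConj k nu i)
      = Finset.Icc 2 (min (nuConj k nu i) j) := by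
    ext x
    simp only [Finset.mem_filter, Finset.mem_Icc]
    omega
  rw [this, Nat.card_Icc]
  omega

end ConjLemmas

end StmtAux

/-- Let `ν` be a partition of `n ≥ 1` with largest part `ℓ = ν_1` and
exactly `k` nonzero parts, `m ≥ 1`.  With `Q_i = onesFam m (ν'_i)` for `1 ≤ i ≤ ℓ`,
`(Q_1,…,Q_ℓ)` is a closed multiset family tuple, each `Q_i` of shape `(m^{ν'_i})`; its
type `λ` is defined with conjugate `λ' = ((m-1)n + ν_1, ν_2, …, ν_k)`; and the conjugate
of the defined type of any multiset family tuple of the same shapes is lexicographically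
at most `λ'`. -/
theorem stmt_17 (m n k : ℕ) (hm : 1 ≤ m) (hn : 1 ≤ n) (nu : ℕ → ℕ)
    (hmono : ∀ i j : ℕ, 1 ≤ i → i ≤ j → nu j ≤ nu i)
    (hpos : ∀ i : ℕ, 1 ≤ i → i ≤ k → 0 < nu i)
    (hzero : ∀ i : ℕ, k < i → nu i = 0)
    (hsum : (∑ i ∈ Finset.Icc 1 k, nu i) = n) :
    (∀ i : ℕ, 1 ≤ i → i ≤ nu 1 →
      IsMsetFamily m (nuConj k nu i) (onesFam m (nuConj k nu i)) ∧
      ClosedMsetFam m (onesFam m (nuConj k nu i))) ∧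
    TypeDefined (tupMultIcc (nu 1) fun i => onesFam m (nuConj k nu i)) ∧
    (tupMultIcc (nu 1) fun i => onesFam m (nuConj k nu i)) 1 = (m - 1) * n + nu 1 ∧
    (∀ j : ℕ, 2 ≤ j → (tupMultIcc (nu 1) fun i => onesFam m (nuConj k nu i)) j = nu j) ∧
    (∀ R : ℕ → Finset (Multiset ℕ),
      (∀ i : ℕ, 1 ≤ i → i ≤ nu 1 → IsMsetFamily m (nuConj k nu i) (R i)) →
      TypeDefined (tupMultIcc (nu 1) R) →
      ((∀ i : ℕ, 1 ≤ i →
          tupMultIcc (nu 1) R i = (tupMultIcc (nu 1) fun i => onesFam m (nuConj k nu i)) i) ∨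
        ∃ j : ℕ, 1 ≤ j ∧
          tupMultIcc (nu 1) R j < (tupMultIcc (nu 1) fun i => onesFam m (nuConj k nu i)) j ∧
          ∀ i : ℕ, 1 ≤ i → i < j →
            tupMultIcc (nu 1) R i
              = (tupMultIcc (nu 1) fun i => onesFam m (nuConj k nu i)) i)) := by
  classical
  have hk1 : 1 ≤ k := by
    by_contra hk
    push_neg at hk
    have hk0 : k = 0 := by omega
    rw [hk0, Finset.Icc_eq_empty (by omega), Finset.sum_empty] at hsum
    omega
  have hnu1 : 1 ≤ nu 1 := hpos 1 le_rfl hk1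
  have hci : ∀ i, 1 ≤ i → i ≤ nu 1 → 1 ≤ nuConj k nu i := fun i h1 h2 =>
    (conj_iff' hmono hzero h1 le_rfl).mpr h2
  have fsum1 : (tupMultIcc (nu 1) fun i => onesFam m (nuConj k nu i)) 1
      = ∑ i ∈ Finset.Icc 1 (nu 1), ((m-1) * nuConj k nu i + 1) := by
    unfold tupMultIcc
    apply Finset.sum_congr rfl
    intro i hi
    rw [Finset.mem_Icc] at hi
    exact msetMult_onesFam_one' m _ (hci i hi.1 hi.2)
  have f1val : (tupMultIcc (nu 1) fun i => onesFam m (nuConj k nu i)) 1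
      = (m-1)*n + nu 1 := by
    rw [fsum1, Finset.sum_add_distrib, ← Finset.mul_sum, sum_conj' hmono n hsum,
      Finset.sum_const, Nat.card_Icc, smul_eq_mul, mul_one]
    omega
  have fge2 : ∀ x, 2 ≤ x →
      (tupMultIcc (nu 1) fun i => onesFam m (nuConj k nu i)) x = nu x := by
    intro x hx
    unfold tupMultIcc
    have h1 : ∀ i ∈ Finset.Icc 1 (nu 1), msetMult (onesFam m (nuConj k nu i)) x
        = if x ≤ nuConj k nu i then 1 else 0 := fun i _ => msetMult_onesFam_ge2' m _ x hx
    rw [Finset.sum_congr rfl h1, ← Finset.card_filter]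
    exact nu_card_filter' hmono hzero (by omega) (hmono 1 x le_rfl (by omega))
  refine ⟨?_, ?_, f1val, fge2, ?_⟩
  · intro i h1 h2
    exact ⟨onesFam_isFamily' m _ hm, onesFam_closed' m _ hm⟩
  · intro i j h1 hij
    rcases eq_or_lt_of_le h1 with h1e | hi2
    · rw [← h1e]
      rcases eq_or_lt_of_le (h1e ▸ hij : 1 ≤ j) with hje | hj2
      · rw [← hje]
      · rw [fge2 j (by omega), f1val]
        have := hmono 1 j le_rfl (by omega)
        omega
    · rw [fge2 i (by omega), fge2 j (by omega)]
      exact hmono i j (by omega) hij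
  · intro R hR _
    by_cases hall : ∀ i, 1 ≤ i → tupMultIcc (nu 1) R i
        = (tupMultIcc (nu 1) fun i => onesFam m (nuConj k nu i)) i
    · exact Or.inl hall
    right
    push_neg at hall
    have hex : ∃ j, 1 ≤ j ∧ tupMultIcc (nu 1) R j
        ≠ (tupMultIcc (nu 1) fun i => onesFam m (nuConj k nu i)) j := by
      obtain ⟨j0, hj0, hne⟩ := hall
      exact ⟨j0, hj0, hne⟩
    obtain ⟨hj1, hjne⟩ := Nat.find_spec hex
    set j := Nat.find hex with hjdef
    have hmin : ∀ i, 1 ≤ i → i < j → tupMultIcc (nu 1) R i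
        = (tupMultIcc (nu 1) fun i => onesFam m (nuConj k nu i)) i := by
      intro i h1 hlt
      by_contra h
      exact Nat.find_min hex hlt ⟨h1, h⟩
    refine ⟨j, hj1, lt_of_le_of_ne ?_ hjne, hmin⟩
    have g1le : tupMultIcc (nu 1) R 1
        ≤ (tupMultIcc (nu 1) fun i => onesFam m (nuConj k nu i)) 1 := by
      rw [fsum1]
      unfold tupMultIcc
      apply Finset.sum_le_sum
      intro i hi
      rw [Finset.mem_Icc] at hi
      exact mult_one_le' m _ _ (hR i hi.1 hi.2)
    rcases eq_or_lt_of_le hj1 with h1e | hj2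
    · rw [← h1e]
      exact g1le
    · have hgf1 : tupMultIcc (nu 1) R 1
          = (tupMultIcc (nu 1) fun i => onesFam m (nuConj k nu i)) 1 :=
        hmin 1 le_rfl hj2
      have heach : ∀ i ∈ Finset.Icc 1 (nu 1),
          msetMult (R i) 1 = (m-1) * nuConj k nu i + 1 := by
        apply (Finset.sum_eq_sum_iff_of_le
          (fun i hi => by
            rw [Finset.mem_Icc] at hi
            exact mult_one_le' m _ _ (hR i hi.1 hi.2))).mp
        rw [← fsum1]
        exact hgf1
      have hstruct : ∀ i ∈ Finset.Icc 1 (nu 1),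
          (∀ x, 2 ≤ x → msetMult (R i) x ≤ 1) ∧
          (∀ jj : ℕ, ∑ x ∈ Finset.Icc 2 jj, msetMult (R i) x ≤ nuConj k nu i - 1) := by
        intro i hi
        have hi' := Finset.mem_Icc.mp hi
        exact struct' m _ hm _ (hR i hi'.1 hi'.2) (heach i hi)
      have hgsum : ∑ x ∈ Finset.Icc 2 j, tupMultIcc (nu 1) R x
          ≤ ∑ i ∈ Finset.Icc 1 (nu 1), (min (nuConj k nu i) j - 1) := by
        unfold tupMultIcc
        rw [Finset.sum_comm]
        apply Finset.sum_le_sum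
        intro i hi
        have h1 := (hstruct i hi).2 j
        have h2 : ∑ x ∈ Finset.Icc 2 j, msetMult (R i) x ≤ j - 1 := by
          calc ∑ x ∈ Finset.Icc 2 j, msetMult (R i) x ≤ ∑ _x ∈ Finset.Icc 2 j, 1 := by
                apply Finset.sum_le_sum
                intro x hx
                exact (hstruct i hi).1 x (Finset.mem_Icc.mp hx).1
            _ ≤ j - 1 := by
                rw [Finset.sum_const, smul_eq_mul, mul_one, Nat.card_Icc]
                omega
        have hi' := Finset.mem_Icc.mp hi
        have hc1 : 1 ≤ nuConj k nu i := hci i hi'.1 hi'.2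
        omega
      have hfsum : ∑ x ∈ Finset.Icc 2 j,
            (tupMultIcc (nu 1) fun i => onesFam m (nuConj k nu i)) x
          = ∑ i ∈ Finset.Icc 1 (nu 1), (min (nuConj k nu i) j - 1) := by
        rw [Finset.sum_congr rfl (fun x hx => fge2 x (Finset.mem_Icc.mp hx).1)]
        exact sum_nu_Icc2' hmono hzero (by omega)
      have hcomp : ∑ x ∈ Finset.Icc 2 j, tupMultIcc (nu 1) R x
          ≤ ∑ x ∈ Finset.Icc 2 j,
            (tupMultIcc (nu 1) fun i => onesFam m (nuConj k nu i)) x := by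
        rw [hfsum]
        exact hgsum
      have hsg : ∑ x ∈ Finset.Icc 2 j, tupMultIcc (nu 1) R x
          = ∑ x ∈ Finset.Icc 2 (j-1), tupMultIcc (nu 1) R x + tupMultIcc (nu 1) R j := by
        conv_lhs => rw [show j = (j-1)+1 by omega]
        rw [Finset.sum_Icc_succ_top (by omega), show j-1+1 = j by omega]
      have hsf : ∑ x ∈ Finset.Icc 2 j,
            (tupMultIcc (nu 1) fun i => onesFam m (nuConj k nu i)) x
          = ∑ x ∈ Finset.Icc 2 (j-1),
              (tupMultIcc (nu 1) fun i => onesFam m (nuConj k nu i)) x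
            + (tupMultIcc (nu 1) fun i => onesFam m (nuConj k nu i)) j := by
        conv_lhs => rw [show j = (j-1)+1 by omega]
        rw [Finset.sum_Icc_succ_top (by omega), show j-1+1 = j by omega]
      have hpref : ∑ x ∈ Finset.Icc 2 (j-1), tupMultIcc (nu 1) R x
          = ∑ x ∈ Finset.Icc 2 (j-1),
              (tupMultIcc (nu 1) fun i => onesFam m (nuConj k nu i)) x := by
        apply Finset.sum_congr rfl
        intro x hx
        have hx' := Finset.mem_Icc.mp hx
        exact hmin x (by omega) (by omega)
      rw [hsg, hsf, hpref] at hcomp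
      omega
end
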